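/- Let n ∈ ℕ, r ∈ ℕ with r ≥ 1, let f₁,…,f_r and g be real-valued functions on ℝ, each n times differentiable, and let c = (c₁,…,c_r) ∈ ℝ^r with c₁+⋯+c_r = 0. Then for every multi-index s = (s₁,…,s_r) of nonnegative integers with s₁+⋯+s_r < n, one has Σ_{k₁+⋯+k_r = n} (n!/(k₁!⋯k_r!)) · Π_{i=1}^r c_i^{k_i} · (f_i · g^{k_i})^{(s_i)} = 0. -/

import Mathlib

open scoped BigOperators
open Finset

private lemma antidiag_eq (r n : ℕ) :
    Finset.Nat.antidiagonalTuple r n = Finset.piAntidiag Finset.univ n := by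
  ext k
  simp [Finset.Nat.mem_antidiagonalTuple, Finset.mem_piAntidiag]

private lemma fps (r : ℕ) (i0 : Fin r) (k : Fin r → ℕ) :
    ∏ i, Nat.factorial ((k + Pi.single i0 1 : Fin r → ℕ) i)
      = (k i0 + 1) * ∏ i, Nat.factorial (k i) := by
  have h : ∀ i, Nat.factorial ((k + Pi.single i0 1 : Fin r → ℕ) i)
      = (if i = i0 then k i0 + 1 else 1) * Nat.factorial (k i) := by
    intro i
    by_cases h : i = i0 <;> simp [h, Pi.single_apply, Nat.factorial_succ]
  rw [Finset.prod_congr rfl fun i _ => h i, Finset.prod_mul_distrib,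
    Finset.prod_ite_eq' Finset.univ i0 (fun _ => k i0 + 1)]
  simp

private lemma msucc (r n : ℕ) (i0 : Fin r) (k : Fin r → ℕ) (hk : ∑ i, k i = n) :
    (k i0 + 1) * Nat.multinomial Finset.univ (k + Pi.single i0 1 : Fin r → ℕ)
      = (n + 1) * Nat.multinomial Finset.univ k := by
  have hsum : ∑ i, (k + Pi.single i0 1 : Fin r → ℕ) i = n + 1 := by
    simp [Finset.sum_add_distrib, hk]
  have h1 := Nat.multinomial_spec Finset.univ (k + Pi.single i0 1 : Fin r → ℕ)
  have h2 := Nat.multinomial_spec Finset.univ k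
  rw [hsum] at h1
  rw [hk] at h2
  apply Nat.eq_of_mul_eq_mul_left (Finset.prod_pos fun i _ => Nat.factorial_pos (k i))
  calc (∏ i, Nat.factorial (k i)) *
        ((k i0 + 1) * Nat.multinomial Finset.univ (k + Pi.single i0 1 : Fin r → ℕ))
      = (∏ i, Nat.factorial ((k + Pi.single i0 1 : Fin r → ℕ) i)) *
          Nat.multinomial Finset.univ (k + Pi.single i0 1 : Fin r → ℕ) := by
        rw [fps]; ring
    _ = (n+1).factorial := h1
    _ = (n+1) * ((∏ i, Nat.factorial (k i)) * Nat.multinomial Finset.univ k) := by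
        rw [h2, Nat.factorial_succ]
    _ = (∏ i, Nat.factorial (k i)) * ((n + 1) * Nat.multinomial Finset.univ k) := by ring

private lemma sum_reindex (r n : ℕ) (i0 : Fin r) (F : (Fin r → ℕ) → ℝ) :
    ∑ k ∈ Finset.piAntidiag (Finset.univ : Finset (Fin r)) (n+1), (k i0 : ℝ) * F k
      = ∑ k ∈ Finset.piAntidiag (Finset.univ : Finset (Fin r)) n,
          ((k i0 : ℝ) + 1) * F (k + Pi.single i0 1) := by
  rw [← Finset.sum_filter_of_ne (p := fun k => k i0 ≠ 0)
    (by intro k _ h hk; exact h (by rw [hk]; simp))]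
  refine Finset.sum_nbij' (fun k => k - Pi.single i0 1) (fun k => k + Pi.single i0 1) ?_ ?_ ?_ ?_ ?_
  · intro k hk
    simp only [Finset.mem_filter, Finset.mem_piAntidiag] at hk
    obtain ⟨⟨hsum, -⟩, hne⟩ := hk
    have hke : (k - Pi.single i0 1 : Fin r → ℕ) + Pi.single i0 1 = k := by
      funext i
      by_cases h : i = i0 <;> simp [h, Pi.single_apply] <;> omega
    simp only [Finset.mem_piAntidiag]
    constructor
    · have h5 : ∑ i, (k - Pi.single i0 1 : Fin r → ℕ) i = n := by
        rw [← hke] at hsum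
        simp only [Pi.add_apply, Finset.sum_add_distrib, Fintype.sum_pi_single'] at hsum
        omega
      exact h5
    · intro i _; exact Finset.mem_univ i
  · intro k hk
    simp only [Finset.mem_piAntidiag] at hk
    simp only [Finset.mem_filter, Finset.mem_piAntidiag]
    refine ⟨⟨?_, fun i _ => Finset.mem_univ i⟩, ?_⟩
    · simp [Finset.sum_add_distrib, hk.1]
    · simp [Pi.single_apply]
  · intro k hk
    simp only [Finset.mem_filter, Finset.mem_piAntidiag] at hk
    funext i
    by_cases h : i = i0 <;> simp [h, Pi.single_apply] <;> omega
  · intro k _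
    funext i
    by_cases h : i = i0 <;> simp [h, Pi.single_apply]
  · intro k hk
    simp only [Finset.mem_filter, Finset.mem_piAntidiag] at hk
    have hke : (k - Pi.single i0 1 : Fin r → ℕ) + Pi.single i0 1 = k := by
      funext i
      by_cases h : i = i0 <;> simp [h, Pi.single_apply] <;> omega
    rw [hke]
    have h1 : ((k - Pi.single i0 1 : Fin r → ℕ) i0 : ℝ) + 1 = (k i0 : ℝ) := by
      have h2 : k i0 ≠ 0 := hk.2
      have h3 : (k i0 - 1) + 1 = k i0 := by omega
      simp only [Pi.sub_apply, Pi.single_apply, if_pos rfl]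
      exact_mod_cast congrArg (Nat.cast (R := ℝ)) h3
    rw [h1]

private lemma itd_add {m : ℕ} {f g : ℝ → ℝ} (hf : ContDiff ℝ (m:ℕ∞) f)
    (hg : ContDiff ℝ (m:ℕ∞) g) (x : ℝ) :
    iteratedDeriv m (fun t => f t + g t) x = iteratedDeriv m f x + iteratedDeriv m g x := by
  simp_rw [← iteratedDerivWithin_univ]
  exact iteratedDerivWithin_add (Set.mem_univ x) uniqueDiffOn_univ (by exact_mod_cast hf.contDiffWithinAt) (by exact_mod_cast hg.contDiffWithinAt)

private lemma itd_cmul {m : ℕ} (a : ℝ) {f : ℝ → ℝ} (hf : ContDiff ℝ (m:ℕ∞) f) (x : ℝ) :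
    iteratedDeriv m (fun t => a * f t) x = a * iteratedDeriv m f x := by
  simp_rw [← iteratedDerivWithin_univ]
  exact iteratedDerivWithin_const_mul (Set.mem_univ x) uniqueDiffOn_univ a (by exact_mod_cast hf.contDiffWithinAt)

private lemma key_itd (p m : ℕ) (f g : ℝ → ℝ) (hf : ContDiff ℝ ((p+1:ℕ):ℕ∞) f)
    (hgp1 : ContDiff ℝ ((p+1:ℕ):ℕ∞) g) (hg' : ContDiff ℝ (p:ℕ∞) (deriv g)) (x : ℝ) :
    iteratedDeriv (p+1) (fun t => f t * g t ^ m) x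
      = iteratedDeriv p (fun t => deriv f t * g t ^ m) x
        + (m:ℝ) * iteratedDeriv p (fun t => (f t * deriv g t) * g t ^ (m-1)) x := by
  have hle1 : ((1:ℕ∞) : WithTop ℕ∞) ≤ ((p+1:ℕ):ℕ∞) := by exact_mod_cast Nat.le_add_left 1 p
  have hlep : ((p:ℕ∞) : WithTop ℕ∞) ≤ ((p+1:ℕ):ℕ∞) := by exact_mod_cast Nat.le_succ p
  have hdf : Differentiable ℝ f := hf.differentiable (by exact_mod_cast Nat.succ_ne_zero p)
  have hdg : Differentiable ℝ g := hgp1.differentiable (by exact_mod_cast Nat.succ_ne_zero p)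
  have hfd : ContDiff ℝ (p:ℕ∞) (deriv f) := by
    have := (contDiff_succ_iff_deriv (n := (p:ℕ∞)) (f := f)).mp ?_
    · exact this.2.2
    · exact_mod_cast hf
  have hgp : ContDiff ℝ (p:ℕ∞) g := hgp1.of_le hlep
  have hfp : ContDiff ℝ (p:ℕ∞) f := hf.of_le hlep
  have hA : ContDiff ℝ (p:ℕ∞) (fun t => deriv f t * g t ^ m) := hfd.mul (hgp.pow m)
  have hB2 : ContDiff ℝ (p:ℕ∞) (fun t => (f t * deriv g t) * g t ^ (m-1)) :=
    (hfp.mul hg').mul (hgp.pow (m-1))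
  have hB : ContDiff ℝ (p:ℕ∞) (fun t => f t * ((m:ℝ) * g t ^ (m-1) * deriv g t)) :=
    hfp.mul ((contDiff_const.mul (hgp.pow (m-1))).mul hg')
  rw [iteratedDeriv_succ']
  have hder : deriv (fun t => f t * g t ^ m)
      = fun t => deriv f t * g t ^ m + f t * ((m:ℝ) * g t ^ (m-1) * deriv g t) := by
    funext t
    exact ((hdf t).hasDerivAt.mul ((hdg t).hasDerivAt.pow m)).deriv
  rw [hder, itd_add hA hB x]
  congr 1
  have hBeq : (fun t => f t * ((m:ℝ) * g t ^ (m-1) * deriv g t))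
      = fun t => (m:ℝ) * ((f t * deriv g t) * g t ^ (m-1)) := by funext t; ring
  rw [hBeq, itd_cmul (m:ℝ) hB2 x]

private lemma main_aux (M : ℕ) : ∀ (r n : ℕ) (f : Fin r → ℝ → ℝ) (g : ℝ → ℝ) (c : Fin r → ℝ)
    (s : Fin r → ℕ), (∀ i, ContDiff ℝ (s i : ℕ∞) (f i)) → ContDiff ℝ (M : ℕ∞) g →
    (∑ i, c i) = 0 → (∑ i, s i) = M → M < n → ∀ x : ℝ,
    ∑ k ∈ Finset.piAntidiag (Finset.univ : Finset (Fin r)) n,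
      (Nat.multinomial Finset.univ k : ℝ) *
        ∏ i, (c i) ^ (k i) * iteratedDeriv (s i) (fun t => f i t * (g t) ^ (k i)) x = 0 := by
  induction M with
  | zero =>
    intro r n f g c s hf hg hc hsum hn x
    have hs0 : ∀ i, s i = 0 := fun i =>
      Finset.sum_eq_zero_iff.mp hsum i (Finset.mem_univ i)
    calc ∑ k ∈ Finset.piAntidiag (Finset.univ : Finset (Fin r)) n,
          (Nat.multinomial Finset.univ k : ℝ) *
            ∏ i, (c i) ^ (k i) * iteratedDeriv (s i) (fun t => f i t * (g t) ^ (k i)) x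
        = ∑ k ∈ Finset.piAntidiag (Finset.univ : Finset (Fin r)) n,
            (∏ i, f i x) * ((Nat.multinomial Finset.univ k : ℝ) * ∏ i, (c i * g x) ^ k i) := by
          refine Finset.sum_congr rfl fun k _ => ?_
          have h7 : ∏ i, (c i) ^ (k i) * iteratedDeriv (s i) (fun t => f i t * (g t) ^ (k i)) x
              = ∏ i, (f i x * (c i * g x) ^ k i) := by
            refine Finset.prod_congr rfl fun i _ => ?_
            simp only [hs0 i, iteratedDeriv_zero, mul_pow]
            ring
          rw [h7, Finset.prod_mul_distrib]
          ring
      _ = (∏ i, f i x) * (∑ i, c i * g x) ^ n := by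
          rw [← Finset.mul_sum, ← Finset.sum_pow_eq_sum_piAntidiag]
      _ = 0 := by
          rw [← Finset.sum_mul, hc, zero_mul, zero_pow (by omega), mul_zero]
  | succ M ih =>
    intro r n f g c s hf hg hc hsum hn x
    obtain ⟨i0, -, hi0⟩ := Finset.exists_ne_zero_of_sum_ne_zero
      (show ∑ i, s i ≠ 0 by omega)
    obtain ⟨p, hp⟩ : ∃ p, s i0 = p + 1 := ⟨s i0 - 1, by omega⟩
    obtain ⟨N, rfl⟩ : ∃ N, n = N + 1 := ⟨n - 1, by omega⟩
    have hsile : s i0 ≤ M + 1 := by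
      have := Finset.single_le_sum (f := s) (fun i _ => Nat.zero_le _) (Finset.mem_univ i0)
      omega
    have hpM : p ≤ M := by omega
    have hgM : ContDiff ℝ (M : ℕ∞) g := hg.of_le (by exact_mod_cast Nat.le_succ M)
    have hgp1 : ContDiff ℝ ((p+1:ℕ):ℕ∞) g := hg.of_le (by exact_mod_cast (show p+1 ≤ M+1 by omega))
    have hg' : ContDiff ℝ (M:ℕ∞) (deriv g) := by
      have := (contDiff_succ_iff_deriv (n := (M:ℕ∞)) (f := g)).mp ?_
      · exact this.2.2
      · exact_mod_cast hg
    have hg'p : ContDiff ℝ (p:ℕ∞) (deriv g) := hg'.of_le (by exact_mod_cast hpM)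
    have hfi0 : ContDiff ℝ ((p+1:ℕ):ℕ∞) (f i0) := by rw [← hp]; exact hf i0
    have hfd : ContDiff ℝ (p:ℕ∞) (deriv (f i0)) := by
      have := (contDiff_succ_iff_deriv (n := (p:ℕ∞)) (f := f i0)).mp ?_
      · exact this.2.2
      · exact_mod_cast hfi0
    -- the two new tuples of functions / orders
    set e : Fin r → ℕ := Pi.single i0 1 with he
    have key : ∀ k : Fin r → ℕ,
        (∏ i, c i ^ k i * iteratedDeriv (s i) (fun t => f i t * g t ^ k i) x)
        = (∏ i, c i ^ k i *
            iteratedDeriv (Function.update s i0 p i)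
              (fun t => Function.update f i0 (deriv (f i0)) i t * g t ^ k i) x)
          + (k i0 : ℝ) * ∏ i, c i ^ k i *
              iteratedDeriv (Function.update s i0 p i)
                (fun t => Function.update f i0 (fun u => f i0 u * deriv g u) i t
                  * g t ^ ((k - e) i)) x := by
      intro k
      have e1 := Finset.mul_prod_erase Finset.univ
        (fun i => c i ^ k i * iteratedDeriv (s i) (fun t => f i t * g t ^ k i) x)
        (Finset.mem_univ i0)
      have e2 := Finset.mul_prod_erase Finset.univ
        (fun i => c i ^ k i * iteratedDeriv (Function.update s i0 p i)
          (fun t => Function.update f i0 (deriv (f i0)) i t * g t ^ k i) x)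
        (Finset.mem_univ i0)
      have e3 := Finset.mul_prod_erase Finset.univ
        (fun i => c i ^ k i * iteratedDeriv (Function.update s i0 p i)
          (fun t => Function.update f i0 (fun u => f i0 u * deriv g u) i t
            * g t ^ ((k - e) i)) x)
        (Finset.mem_univ i0)
      rw [← e1, ← e2, ← e3]
      have hR1 : (∏ i ∈ Finset.univ.erase i0, c i ^ k i *
            iteratedDeriv (Function.update s i0 p i)
              (fun t => Function.update f i0 (deriv (f i0)) i t * g t ^ k i) x)
          = ∏ i ∈ Finset.univ.erase i0, c i ^ k i *
              iteratedDeriv (s i) (fun t => f i t * g t ^ k i) x := by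
        refine Finset.prod_congr rfl fun i hi => ?_
        have hne := Finset.ne_of_mem_erase hi
        rw [Function.update_of_ne hne, Function.update_of_ne hne]
      have hR2 : (∏ i ∈ Finset.univ.erase i0, c i ^ k i *
            iteratedDeriv (Function.update s i0 p i)
              (fun t => Function.update f i0 (fun u => f i0 u * deriv g u) i t
                * g t ^ ((k - e) i)) x)
          = ∏ i ∈ Finset.univ.erase i0, c i ^ k i *
              iteratedDeriv (s i) (fun t => f i t * g t ^ k i) x := by
        refine Finset.prod_congr rfl fun i hi => ?_
        have hne := Finset.ne_of_mem_erase hi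
        have hkei : (k - e) i = k i := by
          simp [he, Pi.single_apply, hne]
        rw [Function.update_of_ne hne, Function.update_of_ne hne, hkei]
      rw [hR1, hR2]
      simp only [Function.update_self]
      have hkei0 : (k - e) i0 = k i0 - 1 := by simp [he, Pi.single_apply]
      rw [hkei0, hp]
      rw [key_itd p (k i0) (f i0) g hfi0 hgp1 hg'p x]
      ring
    have hsum' : ∑ i, Function.update s i0 p i = M := by
      rw [Finset.sum_update_of_mem (Finset.mem_univ i0), ← Finset.erase_eq]
      have h6 := Finset.add_sum_erase Finset.univ s (Finset.mem_univ i0)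
      omega
    have hf1 : ∀ i, ContDiff ℝ ((Function.update s i0 p i : ℕ) : ℕ∞)
        (Function.update f i0 (deriv (f i0)) i) := by
      intro i
      by_cases h : i = i0
      · subst h; simp only [Function.update_self]; exact hfd
      · simp only [Function.update_of_ne h]; exact hf i
    have hf2 : ∀ i, ContDiff ℝ ((Function.update s i0 p i : ℕ) : ℕ∞)
        (Function.update f i0 (fun u => f i0 u * deriv g u) i) := by
      intro i
      by_cases h : i = i0
      · subst h; simp only [Function.update_self]
        exact (hfi0.of_le (by exact_mod_cast Nat.le_succ p)).mul hg'p
      · simp only [Function.update_of_ne h]; exact hf i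
    have S1 : ∑ k ∈ Finset.piAntidiag (Finset.univ : Finset (Fin r)) (N+1),
        (Nat.multinomial Finset.univ k : ℝ) *
          ∏ i, c i ^ k i * iteratedDeriv (Function.update s i0 p i)
            (fun t => Function.update f i0 (deriv (f i0)) i t * g t ^ k i) x = 0 :=
      ih r (N+1) (Function.update f i0 (deriv (f i0))) g c (Function.update s i0 p)
        hf1 hgM hc hsum' (by omega) x
    have S2 : ∑ k ∈ Finset.piAntidiag (Finset.univ : Finset (Fin r)) (N+1),
        (k i0 : ℝ) * ((Nat.multinomial Finset.univ k : ℝ) *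
          ∏ i, c i ^ k i * iteratedDeriv (Function.update s i0 p i)
            (fun t => Function.update f i0 (fun u => f i0 u * deriv g u) i t
              * g t ^ ((k - e) i)) x) = 0 := by
      rw [sum_reindex r N i0]
      have hstep : ∀ k ∈ Finset.piAntidiag (Finset.univ : Finset (Fin r)) N,
          ((k i0 : ℝ) + 1) * ((Nat.multinomial Finset.univ (k + Pi.single i0 1 : Fin r → ℕ) : ℝ) *
            ∏ i, c i ^ ((k + Pi.single i0 1 : Fin r → ℕ) i) *
              iteratedDeriv (Function.update s i0 p i)
                (fun t => Function.update f i0 (fun u => f i0 u * deriv g u) i t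
                  * g t ^ (((k + Pi.single i0 1 : Fin r → ℕ) - e) i)) x)
          = ((N:ℝ) + 1) * c i0 * ((Nat.multinomial Finset.univ k : ℝ) *
            ∏ i, c i ^ k i * iteratedDeriv (Function.update s i0 p i)
              (fun t => Function.update f i0 (fun u => f i0 u * deriv g u) i t
                * g t ^ k i) x) := by
        intro k hk
        simp only [Finset.mem_piAntidiag] at hk
        have hsub : ((k + Pi.single i0 1 : Fin r → ℕ) - e) = k := by
          funext i
          by_cases h : i = i0 <;> simp [he, h, Pi.single_apply]
        rw [hsub]
        have hmult : ((k i0 : ℝ) + 1) * (Nat.multinomial Finset.univ (k + Pi.single i0 1 : Fin r → ℕ) : ℝ)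
            = ((N:ℝ) + 1) * (Nat.multinomial Finset.univ k : ℝ) := by
          have := msucc r N i0 k hk.1
          exact_mod_cast congrArg (Nat.cast (R := ℝ)) this
        have hprod : (∏ i, c i ^ ((k + Pi.single i0 1 : Fin r → ℕ) i) *
              iteratedDeriv (Function.update s i0 p i)
                (fun t => Function.update f i0 (fun u => f i0 u * deriv g u) i t
                  * g t ^ k i) x)
            = c i0 * ∏ i, c i ^ k i * iteratedDeriv (Function.update s i0 p i)
                (fun t => Function.update f i0 (fun u => f i0 u * deriv g u) i t
                  * g t ^ k i) x := by
          have e4 := Finset.mul_prod_erase Finset.univ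
            (fun i => c i ^ ((k + Pi.single i0 1 : Fin r → ℕ) i) *
              iteratedDeriv (Function.update s i0 p i)
                (fun t => Function.update f i0 (fun u => f i0 u * deriv g u) i t
                  * g t ^ k i) x)
            (Finset.mem_univ i0)
          have e5 := Finset.mul_prod_erase Finset.univ
            (fun i => c i ^ k i *
              iteratedDeriv (Function.update s i0 p i)
                (fun t => Function.update f i0 (fun u => f i0 u * deriv g u) i t
                  * g t ^ k i) x)
            (Finset.mem_univ i0)
          rw [← e4, ← e5]
          have hR : (∏ i ∈ Finset.univ.erase i0,
                c i ^ ((k + Pi.single i0 1 : Fin r → ℕ) i) *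
                iteratedDeriv (Function.update s i0 p i)
                  (fun t => Function.update f i0 (fun u => f i0 u * deriv g u) i t
                    * g t ^ k i) x)
              = ∏ i ∈ Finset.univ.erase i0, c i ^ k i *
                  iteratedDeriv (Function.update s i0 p i)
                    (fun t => Function.update f i0 (fun u => f i0 u * deriv g u) i t
                      * g t ^ k i) x := by
            refine Finset.prod_congr rfl fun i hi => ?_
            have hne := Finset.ne_of_mem_erase hi
            have : (k + Pi.single i0 1 : Fin r → ℕ) i = k i := by
              simp [Pi.single_apply, hne]
            rw [this]
          rw [hR]
          have hadd : (k + Pi.single i0 1 : Fin r → ℕ) i0 = k i0 + 1 := by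
            simp [Pi.single_apply]
          simp only [hadd, pow_succ]
          ring
        rw [hprod, ← mul_assoc, hmult]
        ring
      rw [Finset.sum_congr rfl hstep]
      rw [← Finset.mul_sum]
      rw [ih r N (Function.update f i0 (fun u => f i0 u * deriv g u)) g c
        (Function.update s i0 p) hf2 hgM hc hsum' (by omega) x]
      ring
    calc ∑ k ∈ Finset.piAntidiag (Finset.univ : Finset (Fin r)) (N+1),
          (Nat.multinomial Finset.univ k : ℝ) *
            ∏ i, (c i) ^ (k i) * iteratedDeriv (s i) (fun t => f i t * (g t) ^ (k i)) x
        = (∑ k ∈ Finset.piAntidiag (Finset.univ : Finset (Fin r)) (N+1),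
            (Nat.multinomial Finset.univ k : ℝ) *
              ∏ i, c i ^ k i * iteratedDeriv (Function.update s i0 p i)
                (fun t => Function.update f i0 (deriv (f i0)) i t * g t ^ k i) x)
          + ∑ k ∈ Finset.piAntidiag (Finset.univ : Finset (Fin r)) (N+1),
              (k i0 : ℝ) * ((Nat.multinomial Finset.univ k : ℝ) *
                ∏ i, c i ^ k i * iteratedDeriv (Function.update s i0 p i)
                  (fun t => Function.update f i0 (fun u => f i0 u * deriv g u) i t
                    * g t ^ ((k - e) i)) x) := by
          rw [← Finset.sum_add_distrib]
          refine Finset.sum_congr rfl fun k _ => ?_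
          rw [key k]
          ring
      _ = 0 := by rw [S1, S2, add_zero]

theorem stmt_3 (n r : ℕ) (hr : 1 ≤ r)
    (f : Fin r → ℝ → ℝ) (g : ℝ → ℝ)
    (hf : ∀ i, ContDiff ℝ (n : ℕ∞) (f i))
    (hg : ContDiff ℝ (n : ℕ∞) g)
    (c : Fin r → ℝ) (hc : ∑ i, c i = 0)
    (s : Fin r → ℕ) (hs : ∑ i, s i < n) (x : ℝ) :
    ∑ k ∈ Finset.Nat.antidiagonalTuple r n,
      (Nat.multinomial Finset.univ k : ℝ) *
        ∏ i, (c i) ^ (k i) * iteratedDeriv (s i) (fun t => f i t * (g t) ^ (k i)) x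
      = 0 := by
  rw [antidiag_eq]
  refine main_aux (∑ i, s i) r n f g c s ?_ ?_ hc rfl hs x
  · intro i
    refine (hf i).of_le ?_
    have h1 : s i ≤ n := by
      have := Finset.single_le_sum (f := s) (fun j _ => Nat.zero_le _) (Finset.mem_univ i)
      omega
    exact_mod_cast h1
  · exact hg.of_le (by exact_mod_cast hs.le)
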